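/- For the Schwarz lantern, with m = n, lim_{n→∞} Area(P(n,n)) = 2π. -/

import Mathlib

open Real Filter Topology

/-- The area of the Schwarz lantern `P(m,n)`. -/
noncomputable def schwarzArea (m n : ℕ) : ℝ :=
  2 * m * n * Real.sin (π / n) *
    Real.sqrt ((1 - Real.cos (π / n)) ^ 2 + (1 / m : ℝ) ^ 2)

lemma aux_sin_div : Tendsto (fun x : ℝ => Real.sin x / x) (𝓝[≠] 0) (𝓝 1) := by
  have h := (hasDerivAt_iff_tendsto_slope).mp (Real.hasDerivAt_sin 0)
  simp only [Real.cos_zero] at h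
  refine h.congr' ?_
  filter_upwards [self_mem_nhdsWithin] with x hx
  simp [slope_def_field, div_eq_div_iff]

lemma aux_cos_div : Tendsto (fun x : ℝ => (1 - Real.cos x) / x) (𝓝[≠] 0) (𝓝 0) := by
  have hd : HasDerivAt (fun x : ℝ => 1 - Real.cos x) 0 0 := by
    simpa using (Real.hasDerivAt_cos 0).const_sub (1:ℝ)
  have h := (hasDerivAt_iff_tendsto_slope).mp hd
  refine h.congr' ?_
  filter_upwards [self_mem_nhdsWithin] with x hx
  simp [slope_def_field, div_eq_div_iff]

lemma aux_pi_div : Tendsto (fun n : ℕ => π / n) atTop (𝓝[≠] (0:ℝ)) := by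
  refine tendsto_nhdsWithin_of_tendsto_nhds_of_eventually_within _
    (tendsto_const_div_atTop_nhds_zero_nat π) ?_
  filter_upwards [eventually_gt_atTop 0] with n hn
  have : (0:ℝ) < π / n := div_pos Real.pi_pos (by exact_mod_cast hn)
  exact ne_of_gt this

/-- With `m = n`, the Schwarz lantern areas converge to `2π`. -/
theorem schwarz_lantern_diagonal_limit :
    Tendsto (fun n => schwarzArea n n) atTop (𝓝 (2 * π)) := by
  have hA : Tendsto (fun n : ℕ => (n : ℝ) * Real.sin (π / n)) atTop (𝓝 π) := by
    have := (aux_sin_div.comp aux_pi_div).const_mul π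
    simp only [mul_one] at this
    refine this.congr' ?_
    filter_upwards [eventually_gt_atTop 0] with n hn
    have hn' : (n:ℝ) ≠ 0 := by exact_mod_cast hn.ne'
    simp only [Function.comp_apply]
    field_simp [Function.comp]
  have hB : Tendsto (fun n : ℕ => (n : ℝ) * (1 - Real.cos (π / n))) atTop (𝓝 0) := by
    have := (aux_cos_div.comp aux_pi_div).const_mul π
    simp only [mul_zero] at this
    refine this.congr' ?_
    filter_upwards [eventually_gt_atTop 0] with n hn
    have hn' : (n:ℝ) ≠ 0 := by exact_mod_cast hn.ne'
    simp only [Function.comp_apply]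
    field_simp [Function.comp]
  have hS : Tendsto (fun n : ℕ =>
      2 * ((n : ℝ) * Real.sin (π / n)) *
        Real.sqrt (((n : ℝ) * (1 - Real.cos (π / n))) ^ 2 + 1)) atTop (𝓝 (2 * π)) := by
    have hsqrt : Tendsto (fun n : ℕ =>
        Real.sqrt (((n : ℝ) * (1 - Real.cos (π / n))) ^ 2 + 1)) atTop (𝓝 1) := by
      have h1 : Tendsto (fun n : ℕ =>
          ((n : ℝ) * (1 - Real.cos (π / n))) ^ 2 + 1) atTop (𝓝 1) := by
        have := (hB.pow 2).add_const 1
        simpa using this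
      have := (Real.continuous_sqrt.tendsto 1).comp h1
      simpa [Function.comp_def] using this
    have := ((hA.const_mul 2).mul hsqrt)
    simpa using this
  refine hS.congr' ?_
  filter_upwards [eventually_gt_atTop 0] with n hn
  have hn0 : (0:ℝ) ≤ (n:ℝ) := Nat.cast_nonneg n
  have hn' : (n:ℝ) ≠ 0 := by exact_mod_cast hn.ne'
  unfold schwarzArea
  rw [show ((n:ℝ) * (1 - Real.cos (π / n))) ^ 2 + 1
      = (n:ℝ)^2 * ((1 - Real.cos (π / n)) ^ 2 + (1 / (n:ℝ)) ^ 2) by field_simp,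
    Real.sqrt_mul (by positivity), Real.sqrt_sq hn0]
  ring
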